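/- Let G be the graph with vertices {u, v1, v2, w1, w2} and edges {v1u, v1w1, v1w2, uw1, uw2, v2u, v2w1, v2w2} (the 4-wheel-like graph where w1w2 and v1v2 are non-edges). Let L be a list assignment with |L(v1u)| ≥ 2, |L(v2u)| ≥ 2, |L(v1w1)| ≥ 3, |L(v1w2)| ≥ 3, |L(v2w1)| ≥ 3, |L(v2w2)| ≥ 3, |L(uw1)| ≥ 5, |L(uw2)| ≥ 5. Then G has a proper L-edge-colouring. -/
import Mathlib


open SimpleGraph Sum

/-- Two edges of `G` are adjacent if they are distinct edges sharing a vertex. -/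
def EdgeAdj {V : Type*} (G : SimpleGraph V) (e f : Sym2 V) : Prop :=
  e ∈ G.edgeSet ∧ f ∈ G.edgeSet ∧ e ≠ f ∧ ∃ v, v ∈ e ∧ v ∈ f

/-- A proper edge-colouring of `G` choosing each edge's colour from its list. -/
def IsListEdgeColoring {V : Type*} (G : SimpleGraph V) (L : Sym2 V → Finset ℕ)
    (C : Sym2 V → ℕ) : Prop :=
  (∀ e ∈ G.edgeSet, C e ∈ L e) ∧ ∀ e f, EdgeAdj G e f → C e ≠ C f

set_option maxHeartbeats 3200000

namespace Stmt10Aux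

lemma pick_not (S T : Finset ℕ) (h : T.card < S.card) : ∃ x ∈ S, x ∉ T := by
  have h2 := Finset.le_card_sdiff T S
  obtain ⟨x, hx⟩ := Finset.card_pos.mp (show 0 < (S \ T).card by omega)
  rw [Finset.mem_sdiff] at hx
  exact ⟨x, hx.1, hx.2⟩

lemma pick_ne (S : Finset ℕ) (h : 2 ≤ S.card) (a : ℕ) : ∃ x ∈ S, x ≠ a := by
  obtain ⟨x, hx, hxn⟩ := pick_not S {a} (by simp; omega)
  exact ⟨x, hx, by simpa using hxn⟩

lemma c2 (a b : ℕ) : ({a,b} : Finset ℕ).card ≤ 2 :=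
  (Finset.card_insert_le _ _).trans (by simp)

lemma c3 (a b c : ℕ) : ({a,b,c} : Finset ℕ).card ≤ 3 :=
  (Finset.card_insert_le _ _).trans (by have := c2 b c; omega)

lemma c4' (a b c d : ℕ) : ({a,b,c,d} : Finset ℕ).card ≤ 4 :=
  (Finset.card_insert_le _ _).trans (by have := c3 b c d; omega)

lemma c5 (a b c d e : ℕ) : ({a,b,c,d,e} : Finset ℕ).card ≤ 5 :=
  (Finset.card_insert_le _ _).trans (by have := c4' b c d e; omega)

lemma subset3 (X : Finset ℕ) (hX : 3 ≤ X.card) (a b c : ℕ) (hsub : X ⊆ {a,b,c}) :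
    a ≠ b ∧ a ≠ c ∧ b ≠ c ∧ a ∈ X ∧ b ∈ X ∧ c ∈ X := by
  have heq : X = {a,b,c} := Finset.eq_of_subset_of_card_le hsub ((c3 a b c).trans hX)
  have drop : ∀ (T : Finset ℕ), X ⊆ T → T.card ≤ 2 → False := fun T hT hc => by
    have := (Finset.card_le_card hT).trans hc; omega
  have hab : a ≠ b := fun h =>
    drop {b,c} (hsub.trans (by intro x hx; simp at hx ⊢; omega)) (c2 b c)
  have hac : a ≠ c := fun h =>
    drop {b,c} (hsub.trans (by intro x hx; simp at hx ⊢; omega)) (c2 b c)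
  have hbc : b ≠ c := fun h =>
    drop {a,c} (hsub.trans (by intro x hx; simp at hx ⊢; omega)) (c2 a c)
  refine ⟨hab, hac, hbc, ?_, ?_, ?_⟩ <;> rw [heq] <;> simp

lemma subset5 (Z : Finset ℕ) (hZ : 5 ≤ Z.card) (a b c d e : ℕ) (hsub : Z ⊆ {a,b,c,d,e}) :
    a ≠ b ∧ a ≠ c ∧ a ≠ d ∧ a ≠ e ∧ b ≠ c ∧ b ≠ d ∧ b ≠ e ∧ c ≠ d ∧ c ≠ e ∧ d ≠ e ∧
    a ∈ Z ∧ b ∈ Z ∧ c ∈ Z ∧ d ∈ Z ∧ e ∈ Z := by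
  have heq : Z = {a,b,c,d,e} := Finset.eq_of_subset_of_card_le hsub ((c5 a b c d e).trans hZ)
  have drop : ∀ (T : Finset ℕ), Z ⊆ T → T.card ≤ 4 → False := fun T hT hc => by
    have := (Finset.card_le_card hT).trans hc; omega
  have h1 : a ≠ b := fun h =>
    drop {b,c,d,e} (hsub.trans (by intro x hx; simp at hx ⊢; omega)) (c4' b c d e)
  have h2 : a ≠ c := fun h =>
    drop {b,c,d,e} (hsub.trans (by intro x hx; simp at hx ⊢; omega)) (c4' b c d e)
  have h3 : a ≠ d := fun h =>
    drop {b,c,d,e} (hsub.trans (by intro x hx; simp at hx ⊢; omega)) (c4' b c d e)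
  have h4 : a ≠ e := fun h =>
    drop {b,c,d,e} (hsub.trans (by intro x hx; simp at hx ⊢; omega)) (c4' b c d e)
  have h5 : b ≠ c := fun h =>
    drop {a,c,d,e} (hsub.trans (by intro x hx; simp at hx ⊢; omega)) (c4' a c d e)
  have h6 : b ≠ d := fun h =>
    drop {a,c,d,e} (hsub.trans (by intro x hx; simp at hx ⊢; omega)) (c4' a c d e)
  have h7 : b ≠ e := fun h =>
    drop {a,c,d,e} (hsub.trans (by intro x hx; simp at hx ⊢; omega)) (c4' a c d e)
  have h8 : c ≠ d := fun h =>
    drop {a,b,d,e} (hsub.trans (by intro x hx; simp at hx ⊢; omega)) (c4' a b d e)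
  have h9 : c ≠ e := fun h =>
    drop {a,b,d,e} (hsub.trans (by intro x hx; simp at hx ⊢; omega)) (c4' a b d e)
  have h10 : d ≠ e := fun h =>
    drop {a,b,c,e} (hsub.trans (by intro x hx; simp at hx ⊢; omega)) (c4' a b c e)
  refine ⟨h1, h2, h3, h4, h5, h6, h7, h8, h9, h10, ?_, ?_, ?_, ?_, ?_⟩ <;> rw [heq] <;> simp

lemma cycle4 (S1 S2 S3 S4 : Finset ℕ) (h1 : 2 ≤ S1.card) (h2 : 2 ≤ S2.card)
    (h3 : 2 ≤ S3.card) (h4 : 2 ≤ S4.card) :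
    ∃ c1 ∈ S1, ∃ c2 ∈ S2, ∃ c3 ∈ S3, ∃ c4 ∈ S4,
      c1 ≠ c2 ∧ c2 ≠ c3 ∧ c3 ≠ c4 ∧ c4 ≠ c1 := by
  by_cases h12 : S1 ⊆ S2
  · by_cases h23 : S2 ⊆ S3
    · by_cases h34 : S3 ⊆ S4
      · by_cases h41 : S4 ⊆ S1
        · obtain ⟨a, ha, b, hb, hab⟩ := Finset.one_lt_card.mp (by omega : 1 < S1.card)
          exact ⟨a, ha, b, h12 hb, a, h23 (h12 ha), b, h34 (h23 (h12 hb)),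
            hab, fun h => hab h.symm, hab, fun h => hab h.symm⟩
        · rw [Finset.not_subset] at h41
          obtain ⟨c4, hc4, hc4n⟩ := h41
          obtain ⟨c3, hc3, hc34⟩ := pick_ne S3 h3 c4
          obtain ⟨c2, hc2, hc23⟩ := pick_ne S2 h2 c3
          obtain ⟨c1, hc1, hc12⟩ := pick_ne S1 h1 c2
          exact ⟨c1, hc1, c2, hc2, c3, hc3, c4, hc4,
            hc12, hc23, hc34, fun h => hc4n (by rw [h]; exact hc1)⟩
      · rw [Finset.not_subset] at h34
        obtain ⟨c3, hc3, hc3n⟩ := h34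
        obtain ⟨c2, hc2, hc23⟩ := pick_ne S2 h2 c3
        obtain ⟨c1, hc1, hc12⟩ := pick_ne S1 h1 c2
        obtain ⟨c4, hc4, hc41⟩ := pick_ne S4 h4 c1
        exact ⟨c1, hc1, c2, hc2, c3, hc3, c4, hc4,
          hc12, hc23, fun h => hc3n (by rw [h]; exact hc4), hc41⟩
    · rw [Finset.not_subset] at h23
      obtain ⟨c2, hc2, hc2n⟩ := h23
      obtain ⟨c1, hc1, hc12⟩ := pick_ne S1 h1 c2
      obtain ⟨c4, hc4, hc41⟩ := pick_ne S4 h4 c1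
      obtain ⟨c3, hc3, hc34⟩ := pick_ne S3 h3 c4
      exact ⟨c1, hc1, c2, hc2, c3, hc3, c4, hc4,
        hc12, fun h => hc2n (by rw [h]; exact hc3), hc34, hc41⟩
  · rw [Finset.not_subset] at h12
    obtain ⟨c1, hc1, hc1n⟩ := h12
    obtain ⟨c4, hc4, hc41⟩ := pick_ne S4 h4 c1
    obtain ⟨c3, hc3, hc34⟩ := pick_ne S3 h3 c4
    obtain ⟨c2, hc2, hc23⟩ := pick_ne S2 h2 c3
    exact ⟨c1, hc1, c2, hc2, c3, hc3, c4, hc4,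
      fun h => hc1n (by rw [h]; exact hc2), hc23, hc34, hc41⟩

lemma abstract (A B X1 X2 Y1 Y2 Z1 Z2 : Finset ℕ)
    (hA : 2 ≤ A.card) (hB : 2 ≤ B.card) (hX1 : 3 ≤ X1.card) (hX2 : 3 ≤ X2.card)
    (hY1 : 3 ≤ Y1.card) (hY2 : 3 ≤ Y2.card) (hZ1 : 5 ≤ Z1.card) (hZ2 : 5 ≤ Z2.card) :
    ∃ p q x1 x2 y1 y2 z1 z2 : ℕ,
      p ∈ A ∧ q ∈ B ∧ x1 ∈ X1 ∧ x2 ∈ X2 ∧ y1 ∈ Y1 ∧ y2 ∈ Y2 ∧ z1 ∈ Z1 ∧ z2 ∈ Z2 ∧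
      p ≠ q ∧ p ≠ x1 ∧ p ≠ x2 ∧ p ≠ z1 ∧ p ≠ z2 ∧
      q ≠ y1 ∧ q ≠ y2 ∧ q ≠ z1 ∧ q ≠ z2 ∧
      x1 ≠ x2 ∧ x1 ≠ y1 ∧ x1 ≠ z1 ∧ x2 ≠ y2 ∧ x2 ≠ z2 ∧
      y1 ≠ y2 ∧ y1 ≠ z1 ∧ y2 ≠ z2 ∧ z1 ≠ z2 := by
  have solve : ∀ P Q XA XB YA YB ZA ZB : ℕ,
      P ∈ A → Q ∈ B → XA ∈ X1 → XB ∈ X2 → YA ∈ Y1 → YB ∈ Y2 → ZA ∈ Z1 → ZB ∈ Z2 →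
      P ≠ Q → P ≠ XA → P ≠ XB → P ≠ ZA → P ≠ ZB →
      Q ≠ YA → Q ≠ YB → Q ≠ ZA → Q ≠ ZB →
      XA ≠ XB → XA ≠ YA → XA ≠ ZA → XB ≠ YB → XB ≠ ZB →
      YA ≠ YB → YA ≠ ZA → YB ≠ ZB → ZA ≠ ZB →
      (∃ p q x1 x2 y1 y2 z1 z2 : ℕ,
        p ∈ A ∧ q ∈ B ∧ x1 ∈ X1 ∧ x2 ∈ X2 ∧ y1 ∈ Y1 ∧ y2 ∈ Y2 ∧ z1 ∈ Z1 ∧ z2 ∈ Z2 ∧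
        p ≠ q ∧ p ≠ x1 ∧ p ≠ x2 ∧ p ≠ z1 ∧ p ≠ z2 ∧
        q ≠ y1 ∧ q ≠ y2 ∧ q ≠ z1 ∧ q ≠ z2 ∧
        x1 ≠ x2 ∧ x1 ≠ y1 ∧ x1 ≠ z1 ∧ x2 ≠ y2 ∧ x2 ≠ z2 ∧
        y1 ≠ y2 ∧ y1 ≠ z1 ∧ y2 ≠ z2 ∧ z1 ≠ z2) := by
    intro P Q XA XB YA YB ZA ZB m1 m2 m3 m4 m5 m6 m7 m8 d1 d2 d3 d4 d5 d6 d7 d8 d9 d10 d11 d12 d13 d14 d15 d16 d17 d18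
    exact ⟨P, Q, XA, XB, YA, YB, ZA, ZB, m1, m2, m3, m4, m5, m6, m7, m8, d1, d2, d3,
      d4, d5, d6, d7, d8, d9, d10, d11, d12, d13, d14, d15, d16, d17, d18⟩
  obtain ⟨p, hpA⟩ := Finset.card_pos.mp (show 0 < A.card by omega)
  obtain ⟨q, hqB, hqp⟩ := pick_ne B hB p
  have hS1 : 2 ≤ (X1 \ {p}).card := by
    have := Finset.le_card_sdiff {p} X1; simp only [Finset.card_singleton] at this; omega
  have hS2 : 2 ≤ (X2 \ {p}).card := by
    have := Finset.le_card_sdiff {p} X2; simp only [Finset.card_singleton] at this; omega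
  have hS3 : 2 ≤ (Y2 \ {q}).card := by
    have := Finset.le_card_sdiff {q} Y2; simp only [Finset.card_singleton] at this; omega
  have hS4 : 2 ≤ (Y1 \ {q}).card := by
    have := Finset.le_card_sdiff {q} Y1; simp only [Finset.card_singleton] at this; omega
  obtain ⟨x1, hx1m, x2, hx2m, y2, hy2m, y1, hy1m, e12, e23, e34, e41⟩ :=
    cycle4 _ _ _ _ hS1 hS2 hS3 hS4
  rw [Finset.mem_sdiff, Finset.mem_singleton] at hx1m hx2m hy2m hy1m
  obtain ⟨hx1X, hx1p⟩ := hx1m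
  obtain ⟨hx2X, hx2p⟩ := hx2m
  obtain ⟨hy2Y, hy2q⟩ := hy2m
  obtain ⟨hy1Y, hy1q⟩ := hy1m
  have hP1 : 0 < (Z1 \ {p,q,x1,y1}).card := by
    have h := Finset.le_card_sdiff ({p,q,x1,y1} : Finset ℕ) Z1
    have := c4' p q x1 y1; omega
  have hP2 : 0 < (Z2 \ {p,q,x2,y2}).card := by
    have h := Finset.le_card_sdiff ({p,q,x2,y2} : Finset ℕ) Z2
    have := c4' p q x2 y2; omega
  obtain ⟨s1, hs1⟩ := Finset.card_pos.mp hP1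
  obtain ⟨s2, hs2⟩ := Finset.card_pos.mp hP2
  by_cases hgood : ∀ u ∈ Z1 \ ({p,q,x1,y1} : Finset ℕ), ∀ w ∈ Z2 \ ({p,q,x2,y2} : Finset ℕ), u = w
  case neg =>
    push_neg at hgood
    obtain ⟨u, hu, w, hw, huw⟩ := hgood
    rw [Finset.mem_sdiff] at hu hw
    obtain ⟨huZ, hun⟩ := hu
    obtain ⟨hwZ, hwn⟩ := hw
    simp only [Finset.mem_insert, Finset.mem_singleton, not_or] at hun hwn
    obtain ⟨hu1, hu2, hu3, hu4⟩ := hun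
    obtain ⟨hw1, hw2, hw3, hw4⟩ := hwn
    apply solve p q x1 x2 y1 y2 u w <;> first | assumption | (apply Ne.symm; assumption) | omega
  case pos =>
  have hZ1sub : Z1 ⊆ {p, q, x1, y1, s1} := by
    intro u hu
    by_cases hmem : u ∈ ({p,q,x1,y1} : Finset ℕ)
    · simp only [Finset.mem_insert, Finset.mem_singleton] at hmem ⊢; tauto
    · have h1 := hgood u (Finset.mem_sdiff.mpr ⟨hu, hmem⟩) s2 hs2
      have h2 := hgood s1 hs1 s2 hs2
      simp only [Finset.mem_insert, Finset.mem_singleton]; omega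
  have hZ2sub : Z2 ⊆ {p, q, x2, y2, s1} := by
    intro w hw
    by_cases hmem : w ∈ ({p,q,x2,y2} : Finset ℕ)
    · simp only [Finset.mem_insert, Finset.mem_singleton] at hmem ⊢; tauto
    · have h1 := hgood s1 hs1 w (Finset.mem_sdiff.mpr ⟨hw, hmem⟩)
      simp only [Finset.mem_insert, Finset.mem_singleton]; omega
  obtain ⟨n1, n2, n3, n4, n5, n6, n7, n8, n9, n10, mZ1p, mZ1q, mZ1x1, mZ1y1, mZ1s⟩ :=
    subset5 Z1 hZ1 p q x1 y1 s1 hZ1sub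
  obtain ⟨k1, k2, k3, k4, k5, k6, k7, k8, k9, k10, mZ2p, mZ2q, mZ2x2, mZ2y2, mZ2s⟩ :=
    subset5 Z2 hZ2 p q x2 y2 s1 hZ2sub
  by_cases hrx1e : ∃ t ∈ X1, t ∉ ({p, x2, y1, x1} : Finset ℕ)
  · obtain ⟨t, htm, htn⟩ := hrx1e
    simp only [Finset.mem_insert, Finset.mem_singleton, not_or] at htn
    obtain ⟨ht1, ht2, ht3, ht4⟩ := htn
    apply solve p q t x2 y1 y2 x1 s1 <;> first | assumption | (apply Ne.symm; assumption) | omega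
  by_cases hrx2e : ∃ t ∈ X2, t ∉ ({p, x1, y2, x2} : Finset ℕ)
  · obtain ⟨t, htm, htn⟩ := hrx2e
    simp only [Finset.mem_insert, Finset.mem_singleton, not_or] at htn
    obtain ⟨ht1, ht2, ht3, ht4⟩ := htn
    apply solve p q x1 t y1 y2 s1 x2 <;> first | assumption | (apply Ne.symm; assumption) | omega
  by_cases hry1e : ∃ t ∈ Y1, t ∉ ({q, x1, y2, y1} : Finset ℕ)
  · obtain ⟨t, htm, htn⟩ := hry1e
    simp only [Finset.mem_insert, Finset.mem_singleton, not_or] at htn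
    obtain ⟨ht1, ht2, ht3, ht4⟩ := htn
    apply solve p q x1 x2 t y2 y1 s1 <;> first | assumption | (apply Ne.symm; assumption) | omega
  by_cases hry2e : ∃ t ∈ Y2, t ∉ ({q, x2, y1, y2} : Finset ℕ)
  · obtain ⟨t, htm, htn⟩ := hry2e
    simp only [Finset.mem_insert, Finset.mem_singleton, not_or] at htn
    obtain ⟨ht1, ht2, ht3, ht4⟩ := htn
    apply solve p q x1 x2 y1 t s1 y2 <;> first | assumption | (apply Ne.symm; assumption) | omega
  by_cases hrAe : ∃ t ∈ A, t ∉ ({p, q, x1, x2, s1} : Finset ℕ)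
  · obtain ⟨t, htm, htn⟩ := hrAe
    simp only [Finset.mem_insert, Finset.mem_singleton, not_or] at htn
    obtain ⟨ht1, ht2, ht3, ht4, ht5⟩ := htn
    apply solve t q x1 x2 y1 y2 p s1 <;> first | assumption | (apply Ne.symm; assumption) | omega
  by_cases hrBe : ∃ t ∈ B, t ∉ ({q, p, y1, y2, s1} : Finset ℕ)
  · obtain ⟨t, htm, htn⟩ := hrBe
    simp only [Finset.mem_insert, Finset.mem_singleton, not_or] at htn
    obtain ⟨ht1, ht2, ht3, ht4, ht5⟩ := htn
    apply solve p t x1 x2 y1 y2 s1 q <;> first | assumption | (apply Ne.symm; assumption) | omega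
  push_neg at hrx1e hrx2e hry1e hry2e hrAe hrBe
  have hrx1 := hrx1e
  have hrx2 := hrx2e
  have hry1 := hry1e
  have hry2 := hry2e
  obtain ⟨al, halA, halp⟩ := pick_ne A hA p
  obtain ⟨be, hbeB, hbeq⟩ := pick_ne B hB q
  have halmem := hrAe al halA
  have hbemem := hrBe be hbeB
  simp only [Finset.mem_insert, Finset.mem_singleton] at halmem hbemem
  rcases halmem with hc | hc | hc | hc | hc
  · exact absurd hc halp
  · rw [hc] at halA
    rcases hbemem with hd | hd | hd | hd | hd
    · exact absurd hd hbeq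
    · rw [hd] at hbeB
      by_cases hpX1 : p ∈ X1
      · apply solve q p p x2 y1 y2 x1 s1 <;> first | assumption | (apply Ne.symm; assumption) | omega
      by_cases hpX2 : p ∈ X2
      · apply solve q p x1 p y1 y2 s1 x2 <;> first | assumption | (apply Ne.symm; assumption) | omega
      by_cases hqY1 : q ∈ Y1
      · apply solve q p x1 x2 q y2 y1 s1 <;> first | assumption | (apply Ne.symm; assumption) | omega
      by_cases hqY2 : q ∈ Y2
      · apply solve q p x1 x2 y1 q s1 y2 <;> first | assumption | (apply Ne.symm; assumption) | omega
      · have hsubX1e : X1 ⊆ ({x2, y1, x1} : Finset ℕ) := by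
          intro t ht
          have h' := hrx1 t ht
          simp only [Finset.mem_insert, Finset.mem_singleton] at h' ⊢
          rcases h' with h' | h'
          · exact absurd (h' ▸ ht) hpX1
          · exact h'
        obtain ⟨hd1a, -, -, hmX1x2, hmX1y1, -⟩ := subset3 X1 hX1 x2 y1 x1 hsubX1e
        have hsubX2e : X2 ⊆ ({x1, y2, x2} : Finset ℕ) := by
          intro t ht
          have h' := hrx2 t ht
          simp only [Finset.mem_insert, Finset.mem_singleton] at h' ⊢
          rcases h' with h' | h'
          · exact absurd (h' ▸ ht) hpX2
          · exact h'
        obtain ⟨hd1b, -, -, hmX2x1, hmX2y2, -⟩ := subset3 X2 hX2 x1 y2 x2 hsubX2e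
        have hsubY1e : Y1 ⊆ ({x1, y2, y1} : Finset ℕ) := by
          intro t ht
          have h' := hry1 t ht
          simp only [Finset.mem_insert, Finset.mem_singleton] at h' ⊢
          rcases h' with h' | h'
          · exact absurd (h' ▸ ht) hqY1
          · exact h'
        obtain ⟨hd2a, -, -, hmY1x1, hmY1y2, -⟩ := subset3 Y1 hY1 x1 y2 y1 hsubY1e
        have hsubY2e : Y2 ⊆ ({x2, y1, y2} : Finset ℕ) := by
          intro t ht
          have h' := hry2 t ht
          simp only [Finset.mem_insert, Finset.mem_singleton] at h' ⊢
          rcases h' with h' | h'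
          · exact absurd (h' ▸ ht) hqY2
          · exact h'
        obtain ⟨hd2b, -, -, hmY2x2, hmY2y1, -⟩ := subset3 Y2 hY2 x2 y1 y2 hsubY2e
        apply solve q p x2 x1 y2 y1 x1 x2 <;> first | assumption | (apply Ne.symm; assumption) | omega
    · rw [hd] at hbeB
      by_cases hqY1 : q ∈ Y1
      · apply solve p y1 x1 x2 q y2 s1 q <;> first | assumption | (apply Ne.symm; assumption) | omega
      by_cases hqY2 : q ∈ Y2
      · have hsubY1e : Y1 ⊆ ({x1, y2, y1} : Finset ℕ) := by
          intro t ht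
          have h' := hry1 t ht
          simp only [Finset.mem_insert, Finset.mem_singleton] at h' ⊢
          rcases h' with h' | h'
          · exact absurd (h' ▸ ht) hqY1
          · exact h'
        obtain ⟨hd2a, -, -, hmY1x1, hmY1y2, -⟩ := subset3 Y1 hY1 x1 y2 y1 hsubY1e
        apply solve p y1 x1 x2 y2 q q y2 <;> first | assumption | (apply Ne.symm; assumption) | omega
      · have hsubY1e : Y1 ⊆ ({x1, y2, y1} : Finset ℕ) := by
          intro t ht
          have h' := hry1 t ht
          simp only [Finset.mem_insert, Finset.mem_singleton] at h' ⊢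
          rcases h' with h' | h'
          · exact absurd (h' ▸ ht) hqY1
          · exact h'
        obtain ⟨hd2a, -, -, hmY1x1, hmY1y2, -⟩ := subset3 Y1 hY1 x1 y2 y1 hsubY1e
        have hsubY2e : Y2 ⊆ ({x2, y1, y2} : Finset ℕ) := by
          intro t ht
          have h' := hry2 t ht
          simp only [Finset.mem_insert, Finset.mem_singleton] at h' ⊢
          rcases h' with h' | h'
          · exact absurd (h' ▸ ht) hqY2
          · exact h'
        obtain ⟨hd2b, -, -, hmY2x2, hmY2y1, -⟩ := subset3 Y2 hY2 x2 y1 y2 hsubY2e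
        by_cases hpX1 : p ∈ X1
        · apply solve q y1 p x2 x1 y2 s1 p <;> first | assumption | (apply Ne.symm; assumption) | omega
        · have hsubX1e : X1 ⊆ ({x2, y1, x1} : Finset ℕ) := by
            intro t ht
            have h' := hrx1 t ht
            simp only [Finset.mem_insert, Finset.mem_singleton] at h' ⊢
            rcases h' with h' | h'
            · exact absurd (h' ▸ ht) hpX1
            · exact h'
          obtain ⟨hd1a, -, -, hmX1x2, hmX1y1, -⟩ := subset3 X1 hX1 x2 y1 x1 hsubX1e
          apply solve q y1 y1 x2 x1 y2 p s1 <;> first | assumption | (apply Ne.symm; assumption) | omega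
    · rw [hd] at hbeB
      by_cases hqY2 : q ∈ Y2
      · apply solve p y2 x1 x2 y1 q q s1 <;> first | assumption | (apply Ne.symm; assumption) | omega
      by_cases hqY1 : q ∈ Y1
      · have hsubY2e : Y2 ⊆ ({x2, y1, y2} : Finset ℕ) := by
          intro t ht
          have h' := hry2 t ht
          simp only [Finset.mem_insert, Finset.mem_singleton] at h' ⊢
          rcases h' with h' | h'
          · exact absurd (h' ▸ ht) hqY2
          · exact h'
        obtain ⟨hd2b, -, -, hmY2x2, hmY2y1, -⟩ := subset3 Y2 hY2 x2 y1 y2 hsubY2e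
        apply solve p y2 x1 x2 q y1 y1 q <;> first | assumption | (apply Ne.symm; assumption) | omega
      · have hsubY1e : Y1 ⊆ ({x1, y2, y1} : Finset ℕ) := by
          intro t ht
          have h' := hry1 t ht
          simp only [Finset.mem_insert, Finset.mem_singleton] at h' ⊢
          rcases h' with h' | h'
          · exact absurd (h' ▸ ht) hqY1
          · exact h'
        obtain ⟨hd2a, -, -, hmY1x1, hmY1y2, -⟩ := subset3 Y1 hY1 x1 y2 y1 hsubY1e
        have hsubY2e : Y2 ⊆ ({x2, y1, y2} : Finset ℕ) := by
          intro t ht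
          have h' := hry2 t ht
          simp only [Finset.mem_insert, Finset.mem_singleton] at h' ⊢
          rcases h' with h' | h'
          · exact absurd (h' ▸ ht) hqY2
          · exact h'
        obtain ⟨hd2b, -, -, hmY2x2, hmY2y1, -⟩ := subset3 Y2 hY2 x2 y1 y2 hsubY2e
        by_cases hpX2 : p ∈ X2
        · apply solve q y2 x1 p y1 x2 p s1 <;> first | assumption | (apply Ne.symm; assumption) | omega
        · have hsubX2e : X2 ⊆ ({x1, y2, x2} : Finset ℕ) := by
            intro t ht
            have h' := hrx2 t ht
            simp only [Finset.mem_insert, Finset.mem_singleton] at h' ⊢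
            rcases h' with h' | h'
            · exact absurd (h' ▸ ht) hpX2
            · exact h'
          obtain ⟨hd1b, -, -, hmX2x1, hmX2y2, -⟩ := subset3 X2 hX2 x1 y2 x2 hsubX2e
          apply solve q y2 x1 y2 y1 x2 p s1 <;> first | assumption | (apply Ne.symm; assumption) | omega
    · rw [hd] at hbeB
      by_cases hqY1 : q ∈ Y1
      · apply solve p s1 x1 x2 q y2 y1 q <;> first | assumption | (apply Ne.symm; assumption) | omega
      by_cases hqY2 : q ∈ Y2
      · apply solve p s1 x1 x2 y1 q q y2 <;> first | assumption | (apply Ne.symm; assumption) | omega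
      · have hsubY1e : Y1 ⊆ ({x1, y2, y1} : Finset ℕ) := by
          intro t ht
          have h' := hry1 t ht
          simp only [Finset.mem_insert, Finset.mem_singleton] at h' ⊢
          rcases h' with h' | h'
          · exact absurd (h' ▸ ht) hqY1
          · exact h'
        obtain ⟨hd2a, -, -, hmY1x1, hmY1y2, -⟩ := subset3 Y1 hY1 x1 y2 y1 hsubY1e
        have hsubY2e : Y2 ⊆ ({x2, y1, y2} : Finset ℕ) := by
          intro t ht
          have h' := hry2 t ht
          simp only [Finset.mem_insert, Finset.mem_singleton] at h' ⊢
          rcases h' with h' | h'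
          · exact absurd (h' ▸ ht) hqY2
          · exact h'
        obtain ⟨hd2b, -, -, hmY2x2, hmY2y1, -⟩ := subset3 Y2 hY2 x2 y1 y2 hsubY2e
        apply solve p s1 x1 x2 y2 y1 y1 q <;> first | assumption | (apply Ne.symm; assumption) | omega
  · rw [hc] at halA
    by_cases hpX1 : p ∈ X1
    · apply solve x1 q p x2 y1 y2 s1 p <;> first | assumption | (apply Ne.symm; assumption) | omega
    by_cases hpX2 : p ∈ X2
    · have hsubX1e : X1 ⊆ ({x2, y1, x1} : Finset ℕ) := by
        intro t ht
        have h' := hrx1 t ht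
        simp only [Finset.mem_insert, Finset.mem_singleton] at h' ⊢
        rcases h' with h' | h'
        · exact absurd (h' ▸ ht) hpX1
        · exact h'
      obtain ⟨hd1a, -, -, hmX1x2, hmX1y1, -⟩ := subset3 X1 hX1 x2 y1 x1 hsubX1e
      apply solve x1 q x2 p y1 y2 p x2 <;> first | assumption | (apply Ne.symm; assumption) | omega
    · have hsubX1e : X1 ⊆ ({x2, y1, x1} : Finset ℕ) := by
        intro t ht
        have h' := hrx1 t ht
        simp only [Finset.mem_insert, Finset.mem_singleton] at h' ⊢
        rcases h' with h' | h'
        · exact absurd (h' ▸ ht) hpX1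
        · exact h'
      obtain ⟨hd1a, -, -, hmX1x2, hmX1y1, -⟩ := subset3 X1 hX1 x2 y1 x1 hsubX1e
      have hsubX2e : X2 ⊆ ({x1, y2, x2} : Finset ℕ) := by
        intro t ht
        have h' := hrx2 t ht
        simp only [Finset.mem_insert, Finset.mem_singleton] at h' ⊢
        rcases h' with h' | h'
        · exact absurd (h' ▸ ht) hpX2
        · exact h'
      obtain ⟨hd1b, -, -, hmX2x1, hmX2y2, -⟩ := subset3 X2 hX2 x1 y2 x2 hsubX2e
      rcases hbemem with hd | hd | hd | hd | hd
      · exact absurd hd hbeq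
      · rw [hd] at hbeB
        by_cases hqY1 : q ∈ Y1
        · apply solve x1 p y1 x2 q y2 s1 q <;> first | assumption | (apply Ne.symm; assumption) | omega
        · have hsubY1e : Y1 ⊆ ({x1, y2, y1} : Finset ℕ) := by
            intro t ht
            have h' := hry1 t ht
            simp only [Finset.mem_insert, Finset.mem_singleton] at h' ⊢
            rcases h' with h' | h'
            · exact absurd (h' ▸ ht) hqY1
            · exact h'
          obtain ⟨hd2a, -, -, hmY1x1, hmY1y2, -⟩ := subset3 Y1 hY1 x1 y2 y1 hsubY1e
          apply solve x1 p y1 x2 x1 y2 q s1 <;> first | assumption | (apply Ne.symm; assumption) | omega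
      · rw [hd] at hbeB
        by_cases hqY1 : q ∈ Y1
        · apply solve p y1 x1 x2 q y2 s1 q <;> first | assumption | (apply Ne.symm; assumption) | omega
        by_cases hqY2 : q ∈ Y2
        · have hsubY1e : Y1 ⊆ ({x1, y2, y1} : Finset ℕ) := by
            intro t ht
            have h' := hry1 t ht
            simp only [Finset.mem_insert, Finset.mem_singleton] at h' ⊢
            rcases h' with h' | h'
            · exact absurd (h' ▸ ht) hqY1
            · exact h'
          obtain ⟨hd2a, -, -, hmY1x1, hmY1y2, -⟩ := subset3 Y1 hY1 x1 y2 y1 hsubY1e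
          apply solve p y1 x1 x2 y2 q q y2 <;> first | assumption | (apply Ne.symm; assumption) | omega
        · have hsubY1e : Y1 ⊆ ({x1, y2, y1} : Finset ℕ) := by
            intro t ht
            have h' := hry1 t ht
            simp only [Finset.mem_insert, Finset.mem_singleton] at h' ⊢
            rcases h' with h' | h'
            · exact absurd (h' ▸ ht) hqY1
            · exact h'
          obtain ⟨hd2a, -, -, hmY1x1, hmY1y2, -⟩ := subset3 Y1 hY1 x1 y2 y1 hsubY1e
          have hsubY2e : Y2 ⊆ ({x2, y1, y2} : Finset ℕ) := by
            intro t ht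
            have h' := hry2 t ht
            simp only [Finset.mem_insert, Finset.mem_singleton] at h' ⊢
            rcases h' with h' | h'
            · exact absurd (h' ▸ ht) hqY2
            · exact h'
          obtain ⟨hd2b, -, -, hmY2x2, hmY2y1, -⟩ := subset3 Y2 hY2 x2 y1 y2 hsubY2e
          apply solve x1 y1 y1 x2 x1 y2 p q <;> first | assumption | (apply Ne.symm; assumption) | omega
      · rw [hd] at hbeB
        by_cases hqY2 : q ∈ Y2
        · apply solve p y2 x1 x2 y1 q q s1 <;> first | assumption | (apply Ne.symm; assumption) | omega
        by_cases hqY1 : q ∈ Y1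
        · have hsubY2e : Y2 ⊆ ({x2, y1, y2} : Finset ℕ) := by
            intro t ht
            have h' := hry2 t ht
            simp only [Finset.mem_insert, Finset.mem_singleton] at h' ⊢
            rcases h' with h' | h'
            · exact absurd (h' ▸ ht) hqY2
            · exact h'
          obtain ⟨hd2b, -, -, hmY2x2, hmY2y1, -⟩ := subset3 Y2 hY2 x2 y1 y2 hsubY2e
          apply solve p y2 x1 x2 q y1 y1 q <;> first | assumption | (apply Ne.symm; assumption) | omega
        · have hsubY1e : Y1 ⊆ ({x1, y2, y1} : Finset ℕ) := by
            intro t ht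
            have h' := hry1 t ht
            simp only [Finset.mem_insert, Finset.mem_singleton] at h' ⊢
            rcases h' with h' | h'
            · exact absurd (h' ▸ ht) hqY1
            · exact h'
          obtain ⟨hd2a, -, -, hmY1x1, hmY1y2, -⟩ := subset3 Y1 hY1 x1 y2 y1 hsubY1e
          have hsubY2e : Y2 ⊆ ({x2, y1, y2} : Finset ℕ) := by
            intro t ht
            have h' := hry2 t ht
            simp only [Finset.mem_insert, Finset.mem_singleton] at h' ⊢
            rcases h' with h' | h'
            · exact absurd (h' ▸ ht) hqY2
            · exact h'
          obtain ⟨hd2b, -, -, hmY2x2, hmY2y1, -⟩ := subset3 Y2 hY2 x2 y1 y2 hsubY2e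
          apply solve x1 y2 y1 x2 x1 y1 p q <;> first | assumption | (apply Ne.symm; assumption) | omega
      · rw [hd] at hbeB
        by_cases hqY1 : q ∈ Y1
        · apply solve p s1 x1 x2 q y2 y1 q <;> first | assumption | (apply Ne.symm; assumption) | omega
        by_cases hqY2 : q ∈ Y2
        · apply solve p s1 x1 x2 y1 q q y2 <;> first | assumption | (apply Ne.symm; assumption) | omega
        · have hsubY1e : Y1 ⊆ ({x1, y2, y1} : Finset ℕ) := by
            intro t ht
            have h' := hry1 t ht
            simp only [Finset.mem_insert, Finset.mem_singleton] at h' ⊢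
            rcases h' with h' | h'
            · exact absurd (h' ▸ ht) hqY1
            · exact h'
          obtain ⟨hd2a, -, -, hmY1x1, hmY1y2, -⟩ := subset3 Y1 hY1 x1 y2 y1 hsubY1e
          have hsubY2e : Y2 ⊆ ({x2, y1, y2} : Finset ℕ) := by
            intro t ht
            have h' := hry2 t ht
            simp only [Finset.mem_insert, Finset.mem_singleton] at h' ⊢
            rcases h' with h' | h'
            · exact absurd (h' ▸ ht) hqY2
            · exact h'
          obtain ⟨hd2b, -, -, hmY2x2, hmY2y1, -⟩ := subset3 Y2 hY2 x2 y1 y2 hsubY2e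
          apply solve p s1 x1 x2 y2 y1 y1 q <;> first | assumption | (apply Ne.symm; assumption) | omega
  · rw [hc] at halA
    by_cases hpX2 : p ∈ X2
    · apply solve x2 q x1 p y1 y2 p s1 <;> first | assumption | (apply Ne.symm; assumption) | omega
    by_cases hpX1 : p ∈ X1
    · have hsubX2e : X2 ⊆ ({x1, y2, x2} : Finset ℕ) := by
        intro t ht
        have h' := hrx2 t ht
        simp only [Finset.mem_insert, Finset.mem_singleton] at h' ⊢
        rcases h' with h' | h'
        · exact absurd (h' ▸ ht) hpX2
        · exact h'
      obtain ⟨hd1b, -, -, hmX2x1, hmX2y2, -⟩ := subset3 X2 hX2 x1 y2 x2 hsubX2e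
      apply solve x2 q p x1 y1 y2 x1 p <;> first | assumption | (apply Ne.symm; assumption) | omega
    · have hsubX1e : X1 ⊆ ({x2, y1, x1} : Finset ℕ) := by
        intro t ht
        have h' := hrx1 t ht
        simp only [Finset.mem_insert, Finset.mem_singleton] at h' ⊢
        rcases h' with h' | h'
        · exact absurd (h' ▸ ht) hpX1
        · exact h'
      obtain ⟨hd1a, -, -, hmX1x2, hmX1y1, -⟩ := subset3 X1 hX1 x2 y1 x1 hsubX1e
      have hsubX2e : X2 ⊆ ({x1, y2, x2} : Finset ℕ) := by
        intro t ht
        have h' := hrx2 t ht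
        simp only [Finset.mem_insert, Finset.mem_singleton] at h' ⊢
        rcases h' with h' | h'
        · exact absurd (h' ▸ ht) hpX2
        · exact h'
      obtain ⟨hd1b, -, -, hmX2x1, hmX2y2, -⟩ := subset3 X2 hX2 x1 y2 x2 hsubX2e
      rcases hbemem with hd | hd | hd | hd | hd
      · exact absurd hd hbeq
      · rw [hd] at hbeB
        by_cases hqY2 : q ∈ Y2
        · apply solve x2 p x1 y2 y1 q q s1 <;> first | assumption | (apply Ne.symm; assumption) | omega
        · have hsubY2e : Y2 ⊆ ({x2, y1, y2} : Finset ℕ) := by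
            intro t ht
            have h' := hry2 t ht
            simp only [Finset.mem_insert, Finset.mem_singleton] at h' ⊢
            rcases h' with h' | h'
            · exact absurd (h' ▸ ht) hqY2
            · exact h'
          obtain ⟨hd2b, -, -, hmY2x2, hmY2y1, -⟩ := subset3 Y2 hY2 x2 y1 y2 hsubY2e
          apply solve x2 p x1 y2 y1 x2 q s1 <;> first | assumption | (apply Ne.symm; assumption) | omega
      · rw [hd] at hbeB
        by_cases hqY1 : q ∈ Y1
        · apply solve p y1 x1 x2 q y2 s1 q <;> first | assumption | (apply Ne.symm; assumption) | omega
        by_cases hqY2 : q ∈ Y2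
        · have hsubY1e : Y1 ⊆ ({x1, y2, y1} : Finset ℕ) := by
            intro t ht
            have h' := hry1 t ht
            simp only [Finset.mem_insert, Finset.mem_singleton] at h' ⊢
            rcases h' with h' | h'
            · exact absurd (h' ▸ ht) hqY1
            · exact h'
          obtain ⟨hd2a, -, -, hmY1x1, hmY1y2, -⟩ := subset3 Y1 hY1 x1 y2 y1 hsubY1e
          apply solve p y1 x1 x2 y2 q q y2 <;> first | assumption | (apply Ne.symm; assumption) | omega
        · have hsubY1e : Y1 ⊆ ({x1, y2, y1} : Finset ℕ) := by
            intro t ht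
            have h' := hry1 t ht
            simp only [Finset.mem_insert, Finset.mem_singleton] at h' ⊢
            rcases h' with h' | h'
            · exact absurd (h' ▸ ht) hqY1
            · exact h'
          obtain ⟨hd2a, -, -, hmY1x1, hmY1y2, -⟩ := subset3 Y1 hY1 x1 y2 y1 hsubY1e
          have hsubY2e : Y2 ⊆ ({x2, y1, y2} : Finset ℕ) := by
            intro t ht
            have h' := hry2 t ht
            simp only [Finset.mem_insert, Finset.mem_singleton] at h' ⊢
            rcases h' with h' | h'
            · exact absurd (h' ▸ ht) hqY2
            · exact h'
          obtain ⟨hd2b, -, -, hmY2x2, hmY2y1, -⟩ := subset3 Y2 hY2 x2 y1 y2 hsubY2e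
          apply solve x2 y1 x1 y2 y2 x2 p q <;> first | assumption | (apply Ne.symm; assumption) | omega
      · rw [hd] at hbeB
        by_cases hqY2 : q ∈ Y2
        · apply solve p y2 x1 x2 y1 q q s1 <;> first | assumption | (apply Ne.symm; assumption) | omega
        by_cases hqY1 : q ∈ Y1
        · have hsubY2e : Y2 ⊆ ({x2, y1, y2} : Finset ℕ) := by
            intro t ht
            have h' := hry2 t ht
            simp only [Finset.mem_insert, Finset.mem_singleton] at h' ⊢
            rcases h' with h' | h'
            · exact absurd (h' ▸ ht) hqY2
            · exact h'
          obtain ⟨hd2b, -, -, hmY2x2, hmY2y1, -⟩ := subset3 Y2 hY2 x2 y1 y2 hsubY2e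
          apply solve p y2 x1 x2 q y1 y1 q <;> first | assumption | (apply Ne.symm; assumption) | omega
        · have hsubY1e : Y1 ⊆ ({x1, y2, y1} : Finset ℕ) := by
            intro t ht
            have h' := hry1 t ht
            simp only [Finset.mem_insert, Finset.mem_singleton] at h' ⊢
            rcases h' with h' | h'
            · exact absurd (h' ▸ ht) hqY1
            · exact h'
          obtain ⟨hd2a, -, -, hmY1x1, hmY1y2, -⟩ := subset3 Y1 hY1 x1 y2 y1 hsubY1e
          have hsubY2e : Y2 ⊆ ({x2, y1, y2} : Finset ℕ) := by
            intro t ht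
            have h' := hry2 t ht
            simp only [Finset.mem_insert, Finset.mem_singleton] at h' ⊢
            rcases h' with h' | h'
            · exact absurd (h' ▸ ht) hqY2
            · exact h'
          obtain ⟨hd2b, -, -, hmY2x2, hmY2y1, -⟩ := subset3 Y2 hY2 x2 y1 y2 hsubY2e
          apply solve x2 y2 x1 y2 y1 x2 p q <;> first | assumption | (apply Ne.symm; assumption) | omega
      · rw [hd] at hbeB
        by_cases hqY1 : q ∈ Y1
        · apply solve p s1 x1 x2 q y2 y1 q <;> first | assumption | (apply Ne.symm; assumption) | omega
        by_cases hqY2 : q ∈ Y2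
        · apply solve p s1 x1 x2 y1 q q y2 <;> first | assumption | (apply Ne.symm; assumption) | omega
        · have hsubY1e : Y1 ⊆ ({x1, y2, y1} : Finset ℕ) := by
            intro t ht
            have h' := hry1 t ht
            simp only [Finset.mem_insert, Finset.mem_singleton] at h' ⊢
            rcases h' with h' | h'
            · exact absurd (h' ▸ ht) hqY1
            · exact h'
          obtain ⟨hd2a, -, -, hmY1x1, hmY1y2, -⟩ := subset3 Y1 hY1 x1 y2 y1 hsubY1e
          have hsubY2e : Y2 ⊆ ({x2, y1, y2} : Finset ℕ) := by
            intro t ht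
            have h' := hry2 t ht
            simp only [Finset.mem_insert, Finset.mem_singleton] at h' ⊢
            rcases h' with h' | h'
            · exact absurd (h' ▸ ht) hqY2
            · exact h'
          obtain ⟨hd2b, -, -, hmY2x2, hmY2y1, -⟩ := subset3 Y2 hY2 x2 y1 y2 hsubY2e
          apply solve p s1 x1 x2 y2 y1 y1 q <;> first | assumption | (apply Ne.symm; assumption) | omega
  · rw [hc] at halA
    by_cases hpX1 : p ∈ X1
    · apply solve s1 q p x2 y1 y2 x1 p <;> first | assumption | (apply Ne.symm; assumption) | omega
    by_cases hpX2 : p ∈ X2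
    · apply solve s1 q x1 p y1 y2 p x2 <;> first | assumption | (apply Ne.symm; assumption) | omega
    · have hsubX1e : X1 ⊆ ({x2, y1, x1} : Finset ℕ) := by
        intro t ht
        have h' := hrx1 t ht
        simp only [Finset.mem_insert, Finset.mem_singleton] at h' ⊢
        rcases h' with h' | h'
        · exact absurd (h' ▸ ht) hpX1
        · exact h'
      obtain ⟨hd1a, -, -, hmX1x2, hmX1y1, -⟩ := subset3 X1 hX1 x2 y1 x1 hsubX1e
      have hsubX2e : X2 ⊆ ({x1, y2, x2} : Finset ℕ) := by
        intro t ht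
        have h' := hrx2 t ht
        simp only [Finset.mem_insert, Finset.mem_singleton] at h' ⊢
        rcases h' with h' | h'
        · exact absurd (h' ▸ ht) hpX2
        · exact h'
      obtain ⟨hd1b, -, -, hmX2x1, hmX2y2, -⟩ := subset3 X2 hX2 x1 y2 x2 hsubX2e
      apply solve s1 q x2 x1 y1 y2 x1 p <;> first | assumption | (apply Ne.symm; assumption) | omega

def mkC (a b c d e f g h : ℕ) : Sym2 (Fin 5) → ℕ := fun x =>
  if x = s((1:Fin 5),0) then a else if x = s((2:Fin 5),0) then b
  else if x = s((1:Fin 5),3) then c else if x = s((1:Fin 5),4) then d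
  else if x = s((2:Fin 5),3) then e else if x = s((2:Fin 5),4) then f
  else if x = s((0:Fin 5),3) then g else h

lemma mk1 (a b c d e f g h : ℕ) : mkC a b c d e f g h s((1:Fin 5),0) = a := rfl
lemma mk2 (a b c d e f g h : ℕ) : mkC a b c d e f g h s((2:Fin 5),0) = b := rfl
lemma mk3 (a b c d e f g h : ℕ) : mkC a b c d e f g h s((1:Fin 5),3) = c := rfl
lemma mk4 (a b c d e f g h : ℕ) : mkC a b c d e f g h s((1:Fin 5),4) = d := rfl
lemma mk5 (a b c d e f g h : ℕ) : mkC a b c d e f g h s((2:Fin 5),3) = e := rfl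
lemma mk6 (a b c d e f g h : ℕ) : mkC a b c d e f g h s((2:Fin 5),4) = f := rfl
lemma mk7 (a b c d e f g h : ℕ) : mkC a b c d e f g h s((0:Fin 5),3) = g := rfl
lemma mk8 (a b c d e f g h : ℕ) : mkC a b c d e f g h s((0:Fin 5),4) = h := rfl

lemma edge_enum (e : Sym2 (Fin 5))
    (he : e ∈ ((⊤ : SimpleGraph (Fin 5)).deleteEdges
      {s((1 : Fin 5), 2), s((3 : Fin 5), 4)}).edgeSet) :
    e = s((1:Fin 5),0) ∨ e = s((2:Fin 5),0) ∨ e = s((1:Fin 5),3) ∨ e = s((1:Fin 5),4) ∨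
    e = s((2:Fin 5),3) ∨ e = s((2:Fin 5),4) ∨ e = s((0:Fin 5),3) ∨ e = s((0:Fin 5),4) := by
  induction e using Sym2.ind with
  | _ a b =>
    rw [SimpleGraph.mem_edgeSet, SimpleGraph.deleteEdges_adj] at he
    simp only [SimpleGraph.top_adj, Set.mem_insert_iff, Set.mem_singleton_iff] at he
    fin_cases a <;> fin_cases b <;> revert he <;> decide

end Stmt10Aux

/-- the graph on vertices `u = 0, v₁ = 1, v₂ = 2, w₁ = 3, w₂ = 4`
which is `K₅` minus the perfect matching `{v₁v₂, w₁w₂}`, with list sizes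
`|L(v₁u)|, |L(v₂u)| ≥ 2`, `|L(vᵢwⱼ)| ≥ 3`, `|L(uw₁)|, |L(uw₂)| ≥ 5`,
has a proper list edge-colouring. -/
theorem stmt10 (G : SimpleGraph (Fin 5))
    (hG : G = (⊤ : SimpleGraph (Fin 5)).deleteEdges
      {s((1 : Fin 5), 2), s((3 : Fin 5), 4)})
    (L : Sym2 (Fin 5) → Finset ℕ)
    (h1 : 2 ≤ (L s((1 : Fin 5), 0)).card) (h2 : 2 ≤ (L s((2 : Fin 5), 0)).card)
    (h3 : 3 ≤ (L s((1 : Fin 5), 3)).card) (h4 : 3 ≤ (L s((1 : Fin 5), 4)).card)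
    (h5 : 3 ≤ (L s((2 : Fin 5), 3)).card) (h6 : 3 ≤ (L s((2 : Fin 5), 4)).card)
    (h7 : 5 ≤ (L s((0 : Fin 5), 3)).card) (h8 : 5 ≤ (L s((0 : Fin 5), 4)).card) :
    ∃ C, IsListEdgeColoring G L C := by
  obtain ⟨p, q, x1, x2, y1, y2, z1, z2, m1, m2, m3, m4, m5, m6, m7, m8,
      d1, d2, d3, d4, d5, d6, d7, d8, d9, d10, d11, d12, d13, d14, d15, d16, d17, d18⟩ :=
    Stmt10Aux.abstract (L s((1 : Fin 5), 0)) (L s((2 : Fin 5), 0)) (L s((1 : Fin 5), 3))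
      (L s((1 : Fin 5), 4)) (L s((2 : Fin 5), 3)) (L s((2 : Fin 5), 4))
      (L s((0 : Fin 5), 3)) (L s((0 : Fin 5), 4)) h1 h2 h3 h4 h5 h6 h7 h8
  subst hG
  refine ⟨Stmt10Aux.mkC p q x1 x2 y1 y2 z1 z2, ?_, ?_⟩
  · intro e he
    rcases Stmt10Aux.edge_enum e he with rfl | rfl | rfl | rfl | rfl | rfl | rfl | rfl <;>
      simp only [Stmt10Aux.mk1, Stmt10Aux.mk2, Stmt10Aux.mk3, Stmt10Aux.mk4,
        Stmt10Aux.mk5, Stmt10Aux.mk6, Stmt10Aux.mk7, Stmt10Aux.mk8] <;>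
      assumption
  · rintro e f ⟨he, hf, hnef, v, hve, hvf⟩
    rcases Stmt10Aux.edge_enum e he with rfl | rfl | rfl | rfl | rfl | rfl | rfl | rfl <;>
    rcases Stmt10Aux.edge_enum f hf with rfl | rfl | rfl | rfl | rfl | rfl | rfl | rfl <;>
    simp only [Stmt10Aux.mk1, Stmt10Aux.mk2, Stmt10Aux.mk3, Stmt10Aux.mk4,
        Stmt10Aux.mk5, Stmt10Aux.mk6, Stmt10Aux.mk7, Stmt10Aux.mk8] <;>
    first
      | exact absurd rfl hnef
      | assumption
      | (apply Ne.symm; assumption)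
      | (exfalso; simp only [Sym2.mem_iff] at hve hvf;
         rcases hve with rfl | rfl <;> rcases hvf with h | h <;> exact absurd h (by decide))
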